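/- Let μ_n and μ be probability measures on [0,1]² with joint distribution functions F_n and F, and suppose each μ_n has uniform marginals. If μ_n converges weakly to μ, then sup_{x,y∈[0,1]} |F_n(x,y) − F(x,y)| → 0 (i.e., pointwise weak convergence upgrades to uniform convergence of distribution functions). -/

import Mathlib

open MeasureTheory

namespace UniformDFAux

open Filter Set

lemma margin_fst' (ν : Measure (ℝ×ℝ))
    (h : ν.map Prod.fst = volume.restrict (Icc (0:ℝ) 1)) (a b : ℝ) :
    ν (Ioc a b ×ˢ univ) ≤ ENNReal.ofReal (b - a) := by
  have hset : (Ioc a b ×ˢ (univ : Set ℝ)) = Prod.fst ⁻¹' Ioc a b := by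
    ext p; simp
  rw [hset, ← Measure.map_apply measurable_fst measurableSet_Ioc, h,
    Measure.restrict_apply' measurableSet_Icc]
  calc volume (Ioc a b ∩ Icc 0 1) ≤ volume (Ioc a b) := measure_mono inter_subset_left
    _ = ENNReal.ofReal (b - a) := Real.volume_Ioc

lemma margin_snd' (ν : Measure (ℝ×ℝ))
    (h : ν.map Prod.snd = volume.restrict (Icc (0:ℝ) 1)) (a b : ℝ) :
    ν ((univ : Set ℝ) ×ˢ Ioc a b) ≤ ENNReal.ofReal (b - a) := by
  have hset : ((univ : Set ℝ) ×ˢ Ioc a b) = Prod.snd ⁻¹' Ioc a b := by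
    ext p; simp
  rw [hset, ← Measure.map_apply measurable_snd measurableSet_Ioc, h,
    Measure.restrict_apply' measurableSet_Icc]
  calc volume (Ioc a b ∩ Icc 0 1) ≤ volume (Ioc a b) := measure_mono inter_subset_left
    _ = ENNReal.ofReal (b - a) := Real.volume_Ioc

lemma limit_margin_fst (μs : ℕ → ProbabilityMeasure (ℝ × ℝ)) (μ : ProbabilityMeasure (ℝ × ℝ))
    (hb : ∀ n a b, (μs n : Measure (ℝ×ℝ)) (Ioc a b ×ˢ univ) ≤ ENNReal.ofReal (b - a))
    (hweak : Tendsto μs atTop (nhds μ)) (a b : ℝ) :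
    (μ : Measure (ℝ×ℝ)) (Ioc a b ×ˢ univ) ≤ ENNReal.ofReal (b - a) := by
  refine ENNReal.le_of_forall_pos_le_add fun ε hε _ => ?_
  have hsub : Ioc a b ×ˢ (univ : Set ℝ) ⊆ Ioo a (b + ε) ×ˢ univ := by
    refine prod_mono (fun x hx => ?_) le_rfl
    have : (0:ℝ) < ε := hε
    exact ⟨hx.1, lt_of_le_of_lt hx.2 (by linarith)⟩
  have hopen : IsOpen (Ioo a (b + (ε:ℝ)) ×ˢ (univ : Set ℝ)) := isOpen_Ioo.prod isOpen_univ
  have h1 := ProbabilityMeasure.le_liminf_measure_open_of_tendsto hweak hopen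
  have h2 : (atTop.liminf fun n => (μs n : Measure (ℝ×ℝ)) (Ioo a (b+ε) ×ˢ univ))
      ≤ ENNReal.ofReal (b + ε - a) := by
    refine le_trans (liminf_le_liminf (Eventually.of_forall fun n => ?_)) (le_of_eq (liminf_const _))
    exact le_trans (measure_mono (prod_mono Ioo_subset_Ioc_self le_rfl)) (hb n a (b+ε))
  calc (μ : Measure (ℝ×ℝ)) (Ioc a b ×ˢ univ) ≤ _ := measure_mono hsub
    _ ≤ _ := h1
    _ ≤ ENNReal.ofReal (b + ε - a) := h2
    _ ≤ ENNReal.ofReal (b - a) + ε := by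
        rw [show b + (ε:ℝ) - a = (b - a) + ε by ring]
        exact le_trans ENNReal.ofReal_add_le (by rw [ENNReal.ofReal_coe_nnreal])

lemma limit_margin_snd (μs : ℕ → ProbabilityMeasure (ℝ × ℝ)) (μ : ProbabilityMeasure (ℝ × ℝ))
    (hb : ∀ n a b, (μs n : Measure (ℝ×ℝ)) ((univ : Set ℝ) ×ˢ Ioc a b) ≤ ENNReal.ofReal (b - a))
    (hweak : Tendsto μs atTop (nhds μ)) (a b : ℝ) :
    (μ : Measure (ℝ×ℝ)) ((univ : Set ℝ) ×ˢ Ioc a b) ≤ ENNReal.ofReal (b - a) := by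
  refine ENNReal.le_of_forall_pos_le_add fun ε hε _ => ?_
  have hsub : (univ : Set ℝ) ×ˢ Ioc a b ⊆ univ ×ˢ Ioo a (b + ε) := by
    refine prod_mono le_rfl (fun x hx => ?_)
    have : (0:ℝ) < ε := hε
    exact ⟨hx.1, lt_of_le_of_lt hx.2 (by linarith)⟩
  have hopen : IsOpen ((univ : Set ℝ) ×ˢ Ioo a (b + (ε:ℝ))) := isOpen_univ.prod isOpen_Ioo
  have h1 := ProbabilityMeasure.le_liminf_measure_open_of_tendsto hweak hopen
  have h2 : (atTop.liminf fun n => (μs n : Measure (ℝ×ℝ)) ((univ : Set ℝ) ×ˢ Ioo a (b+ε)))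
      ≤ ENNReal.ofReal (b + ε - a) := by
    refine le_trans (liminf_le_liminf (Eventually.of_forall fun n => ?_)) (le_of_eq (liminf_const _))
    exact le_trans (measure_mono (prod_mono le_rfl Ioo_subset_Ioc_self)) (hb n a (b+ε))
  calc (μ : Measure (ℝ×ℝ)) ((univ : Set ℝ) ×ˢ Ioc a b) ≤ _ := measure_mono hsub
    _ ≤ _ := h1
    _ ≤ ENNReal.ofReal (b + ε - a) := h2
    _ ≤ ENNReal.ofReal (b - a) + ε := by
        rw [show b + (ε:ℝ) - a = (b - a) + ε by ring]
        exact le_trans ENNReal.ofReal_add_le (by rw [ENNReal.ofReal_coe_nnreal])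

/-- Lipschitz-type bound for the distribution function of a finite measure with
marginal bounds. -/
lemma df_lip (ν : Measure (ℝ×ℝ)) [IsFiniteMeasure ν]
    (h1 : ∀ a b : ℝ, ν (Ioc a b ×ˢ univ) ≤ ENNReal.ofReal (b-a))
    (h2 : ∀ a b : ℝ, ν ((univ : Set ℝ) ×ˢ Ioc a b) ≤ ENNReal.ofReal (b-a))
    {a b c d : ℝ} (hac : a ≤ c) (hbd : b ≤ d) :
    (ν (Iic c ×ˢ Iic d)).toReal ≤ (ν (Iic a ×ˢ Iic b)).toReal + (c-a) + (d-b) := by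
  have hsub : Iic c ×ˢ Iic d ⊆ (Iic a ×ˢ Iic b) ∪ ((Ioc a c ×ˢ univ) ∪ (univ ×ˢ Ioc b d)) := by
    rintro ⟨x,y⟩ ⟨hx, hy⟩
    simp only [mem_Iic] at hx hy
    by_cases h : x ≤ a
    · by_cases h' : y ≤ b
      · exact Or.inl ⟨h, h'⟩
      · exact Or.inr (Or.inr ⟨trivial, lt_of_not_ge h', hy⟩)
    · exact Or.inr (Or.inl ⟨⟨lt_of_not_ge h, hx⟩, trivial⟩)
  have hle : ν (Iic c ×ˢ Iic d) ≤ ν (Iic a ×ˢ Iic b)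
      + (ENNReal.ofReal (c-a) + ENNReal.ofReal (d-b)) := by
    refine (measure_mono hsub).trans ?_
    refine (measure_union_le _ _).trans ?_
    gcongr
    refine (measure_union_le _ _).trans ?_
    gcongr
    exacts [h1 a c, h2 b d]
  have hne : ν (Iic a ×ˢ Iic b) + (ENNReal.ofReal (c-a) + ENNReal.ofReal (d-b)) ≠ ⊤ := by
    finiteness
  have := ENNReal.toReal_mono hne hle
  rw [ENNReal.toReal_add (by finiteness) (by finiteness),
    ENNReal.toReal_add (by finiteness) (by finiteness),
    ENNReal.toReal_ofReal (by linarith), ENNReal.toReal_ofReal (by linarith)] at this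
  linarith

lemma df_mono (ν : Measure (ℝ×ℝ)) [IsFiniteMeasure ν]
    {a b c d : ℝ} (hac : a ≤ c) (hbd : b ≤ d) :
    (ν (Iic a ×ˢ Iic b)).toReal ≤ (ν (Iic c ×ˢ Iic d)).toReal :=
  ENNReal.toReal_mono (measure_ne_top _ _)
    (measure_mono (prod_mono (Iic_subset_Iic.2 hac) (Iic_subset_Iic.2 hbd)))

end UniformDFAux

open UniformDFAux

/-- Let `μₙ` and `μ` be probability measures on `[0,1]²` (probability measures on `ℝ²`
living on the unit square), with each `μₙ` having uniform marginals. If `μₙ` converges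
weakly to `μ`, then the joint distribution functions `Fₙ(x,y) = μₙ([0,x]×[0,y])`
converge uniformly on `[0,1]²` to `F(x,y) = μ([0,x]×[0,y])`. -/
theorem uniform_conv_of_df_of_weak_conv
    (μs : ℕ → ProbabilityMeasure (ℝ × ℝ)) (μ : ProbabilityMeasure (ℝ × ℝ))
    (hfst : ∀ n, (μs n : Measure (ℝ × ℝ)).map Prod.fst = volume.restrict (Set.Icc (0:ℝ) 1))
    (hsnd : ∀ n, (μs n : Measure (ℝ × ℝ)).map Prod.snd = volume.restrict (Set.Icc (0:ℝ) 1))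
    (hμ : (μ : Measure (ℝ × ℝ)) (Set.Icc (0:ℝ) 1 ×ˢ Set.Icc (0:ℝ) 1) = 1)
    (hweak : Filter.Tendsto μs Filter.atTop (nhds μ)) :
    TendstoUniformlyOn
      (fun n (p : ℝ × ℝ) => ((μs n : Measure (ℝ × ℝ)) (Set.Iic p.1 ×ˢ Set.Iic p.2)).toReal)
      (fun p => ((μ : Measure (ℝ × ℝ)) (Set.Iic p.1 ×ˢ Set.Iic p.2)).toReal)
      Filter.atTop (Set.Icc (0:ℝ) 1 ×ˢ Set.Icc (0:ℝ) 1) := by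
  classical
  have hb1 : ∀ n (a b : ℝ),
      (μs n : Measure (ℝ×ℝ)) (Set.Ioc a b ×ˢ Set.univ) ≤ ENNReal.ofReal (b-a) :=
    fun n a b => margin_fst' _ (hfst n) a b
  have hb2 : ∀ n (a b : ℝ),
      (μs n : Measure (ℝ×ℝ)) ((Set.univ : Set ℝ) ×ˢ Set.Ioc a b) ≤ ENNReal.ofReal (b-a) :=
    fun n a b => margin_snd' _ (hsnd n) a b
  have hm1 : ∀ a b : ℝ,
      (μ : Measure (ℝ×ℝ)) (Set.Ioc a b ×ˢ Set.univ) ≤ ENNReal.ofReal (b-a) :=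
    limit_margin_fst μs μ hb1 hweak
  have hm2 : ∀ a b : ℝ,
      (μ : Measure (ℝ×ℝ)) ((Set.univ : Set ℝ) ×ˢ Set.Ioc a b) ≤ ENNReal.ofReal (b-a) :=
    limit_margin_snd μs μ hb2 hweak
  -- vertical and horizontal lines are null for μ
  have hline1 : ∀ x : ℝ, (μ : Measure (ℝ×ℝ)) ({x} ×ˢ (Set.univ : Set ℝ)) = 0 := by
    intro x
    refine le_antisymm ?_ zero_le
    have key : ∀ ε : NNReal, 0 < ε → (0:ENNReal) < ⊤ →
        (μ : Measure (ℝ×ℝ)) ({x} ×ˢ (Set.univ : Set ℝ)) ≤ 0 + ε := by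
      intro ε hε _
      have hpos : (0:ℝ) < ε := hε
      have hsub : ({x} : Set ℝ) ×ˢ (Set.univ : Set ℝ) ⊆ Set.Ioc (x-ε) x ×ˢ Set.univ := by
        refine Set.prod_mono (fun z hz => ?_) le_rfl
        rcases hz with rfl
        exact ⟨by linarith, le_refl _⟩
      calc (μ : Measure (ℝ×ℝ)) ({x} ×ˢ (Set.univ : Set ℝ))
          ≤ (μ : Measure (ℝ×ℝ)) (Set.Ioc (x-ε) x ×ˢ Set.univ) := measure_mono hsub
        _ ≤ ENNReal.ofReal (x - (x-ε)) := hm1 _ _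
        _ = (ε : ENNReal) := by
            rw [show x - (x - (ε:ℝ)) = (ε:ℝ) by ring, ENNReal.ofReal_coe_nnreal]
        _ = 0 + ε := by rw [zero_add]
    simpa using ENNReal.le_of_forall_pos_le_add (fun ε hε h => key ε hε (by simp))
  have hline2 : ∀ y : ℝ, (μ : Measure (ℝ×ℝ)) ((Set.univ : Set ℝ) ×ˢ {y}) = 0 := by
    intro y
    refine le_antisymm ?_ zero_le
    have key : ∀ ε : NNReal, 0 < ε → (0:ENNReal) < ⊤ →
        (μ : Measure (ℝ×ℝ)) ((Set.univ : Set ℝ) ×ˢ {y}) ≤ 0 + ε := by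
      intro ε hε _
      have hpos : (0:ℝ) < ε := hε
      have hsub : (Set.univ : Set ℝ) ×ˢ ({y} : Set ℝ) ⊆ Set.univ ×ˢ Set.Ioc (y-ε) y := by
        refine Set.prod_mono le_rfl (fun z hz => ?_)
        rcases hz with rfl
        exact ⟨by linarith, le_refl _⟩
      calc (μ : Measure (ℝ×ℝ)) ((Set.univ : Set ℝ) ×ˢ {y})
          ≤ (μ : Measure (ℝ×ℝ)) (Set.univ ×ˢ Set.Ioc (y-ε) y) := measure_mono hsub
        _ ≤ ENNReal.ofReal (y - (y-ε)) := hm2 _ _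
        _ = (ε : ENNReal) := by
            rw [show y - (y - (ε:ℝ)) = (ε:ℝ) by ring, ENNReal.ofReal_coe_nnreal]
        _ = 0 + ε := by rw [zero_add]
    simpa using ENNReal.le_of_forall_pos_le_add (fun ε hε h => key ε hε (by simp))
  -- null frontier and pointwise convergence
  have hfr : ∀ p : ℝ×ℝ,
      (μ : Measure (ℝ×ℝ)) (frontier (Set.Iic p.1 ×ˢ Set.Iic p.2)) = 0 := by
    intro p
    have hsub : frontier (Set.Iic p.1 ×ˢ Set.Iic p.2)
        ⊆ ({p.1} ×ˢ (Set.univ : Set ℝ)) ∪ ((Set.univ : Set ℝ) ×ˢ {p.2}) := by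
      rw [frontier_prod_eq, frontier_Iic, frontier_Iic]
      rintro ⟨a,b⟩ (⟨-, hb⟩ | ⟨ha, -⟩)
      · exact Or.inr ⟨trivial, hb⟩
      · exact Or.inl ⟨ha, trivial⟩
    exact measure_mono_null hsub (measure_union_null (hline1 p.1) (hline2 p.2))
  have hpt : ∀ p : ℝ×ℝ,
      Filter.Tendsto (fun n => ((μs n : Measure (ℝ×ℝ)) (Set.Iic p.1 ×ˢ Set.Iic p.2)).toReal)
        Filter.atTop (nhds (((μ : Measure (ℝ×ℝ)) (Set.Iic p.1 ×ˢ Set.Iic p.2)).toReal)) := by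
    intro p
    have h := ProbabilityMeasure.tendsto_measure_of_null_frontier_of_tendsto' hweak (hfr p)
    exact (ENNReal.tendsto_toReal (measure_ne_top _ _)).comp h
  -- the grid argument
  rw [Metric.tendstoUniformlyOn_iff]
  intro ε hε
  obtain ⟨k, hk⟩ := exists_nat_one_div_lt (show (0:ℝ) < ε/4 by linarith)
  set K : ℕ := k + 1 with hKdef
  have hK : (0:ℝ) < (K:ℝ) := by positivity
  have hK4 : (1:ℝ)/(K:ℝ) < ε/4 := by
    have : ((K:ℝ)) = (k:ℝ) + 1 := by push_cast [hKdef]; ring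
    rw [this]; exact hk
  clear_value K
  have hgrid : ∀ᶠ n in Filter.atTop, ∀ i ∈ Finset.range (K+2), ∀ j ∈ Finset.range (K+2),
      |((μ : Measure (ℝ×ℝ)) (Set.Iic ((i:ℝ)/K) ×ˢ Set.Iic ((j:ℝ)/K))).toReal
        - ((μs n : Measure (ℝ×ℝ)) (Set.Iic ((i:ℝ)/K) ×ˢ Set.Iic ((j:ℝ)/K))).toReal| < ε/4 := by
    rw [Filter.eventually_all_finset]
    intro i _
    rw [Filter.eventually_all_finset]
    intro j _
    have h := hpt ((i:ℝ)/K, (j:ℝ)/K)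
    have hball := h.eventually_mem (Metric.ball_mem_nhds _ (show (0:ℝ) < ε/4 by linarith))
    filter_upwards [hball] with n hn
    rw [Metric.mem_ball, Real.dist_eq] at hn
    rw [abs_sub_comm]
    exact hn
  filter_upwards [hgrid] with n hn p hp
  obtain ⟨x, y⟩ := p
  simp only [Set.mem_prod, Set.mem_Icc] at hp
  obtain ⟨⟨hx0, hx1⟩, hy0, hy1⟩ := hp
  set i : ℕ := ⌊x * K⌋.toNat with hidef
  set j : ℕ := ⌊y * K⌋.toNat with hjdef
  have hxK0 : (0:ℝ) ≤ x * K := by positivity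
  have hyK0 : (0:ℝ) ≤ y * K := by positivity
  have hic : ((i:ℝ)) = ((⌊x * K⌋ : ℤ) : ℝ) := by
    rw [hidef]; exact_mod_cast Int.toNat_of_nonneg (Int.floor_nonneg.2 hxK0)
  have hjc : ((j:ℝ)) = ((⌊y * K⌋ : ℤ) : ℝ) := by
    rw [hjdef]; exact_mod_cast Int.toNat_of_nonneg (Int.floor_nonneg.2 hyK0)
  have hi1 : (i:ℝ) ≤ x * K := by rw [hic]; exact Int.floor_le _
  have hi2 : x * K < (i:ℝ) + 1 := by rw [hic]; exact Int.lt_floor_add_one _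
  have hj1 : (j:ℝ) ≤ y * K := by rw [hjc]; exact Int.floor_le _
  have hj2 : y * K < (j:ℝ) + 1 := by rw [hjc]; exact Int.lt_floor_add_one _
  have hiK : i ≤ K := by
    have : (i:ℝ) ≤ (K:ℝ) := le_trans hi1 (by nlinarith)
    exact_mod_cast this
  have hjK : j ≤ K := by
    have : (j:ℝ) ≤ (K:ℝ) := le_trans hj1 (by nlinarith)
    exact_mod_cast this
  have hxlo : (i:ℝ)/K ≤ x := by rw [div_le_iff₀ hK]; linarith
  have hxhi : x ≤ ((i:ℝ)+1)/K := by rw [le_div_iff₀ hK]; linarith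
  have hylo : (j:ℝ)/K ≤ y := by rw [div_le_iff₀ hK]; linarith
  have hyhi : y ≤ ((j:ℝ)+1)/K := by rw [le_div_iff₀ hK]; linarith
  have himem : i ∈ Finset.range (K+2) := Finset.mem_range.2 (by omega)
  have hjmem : j ∈ Finset.range (K+2) := Finset.mem_range.2 (by omega)
  have hi1mem : i + 1 ∈ Finset.range (K+2) := Finset.mem_range.2 (by omega)
  have hj1mem : j + 1 ∈ Finset.range (K+2) := Finset.mem_range.2 (by omega)
  have hgA := hn i himem j hjmem
  have hgB := hn (i+1) hi1mem (j+1) hj1mem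
  push_cast at hgB
  -- abbreviations
  set F : ℝ → ℝ → ℝ := fun a b => ((μ : Measure (ℝ×ℝ)) (Set.Iic a ×ˢ Set.Iic b)).toReal with hFdef
  set G : ℝ → ℝ → ℝ := fun a b =>
    ((μs n : Measure (ℝ×ℝ)) (Set.Iic a ×ˢ Set.Iic b)).toReal with hGdef
  have lipF : ∀ {a b c d : ℝ}, a ≤ c → b ≤ d → F c d ≤ F a b + (c-a) + (d-b) :=
    fun hac hbd => df_lip _ hm1 hm2 hac hbd
  have lipG : ∀ {a b c d : ℝ}, a ≤ c → b ≤ d → G c d ≤ G a b + (c-a) + (d-b) :=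
    fun hac hbd => df_lip _ (hb1 n) (hb2 n) hac hbd
  have monoF : ∀ {a b c d : ℝ}, a ≤ c → b ≤ d → F a b ≤ F c d :=
    fun hac hbd => df_mono _ hac hbd
  have monoG : ∀ {a b c d : ℝ}, a ≤ c → b ≤ d → G a b ≤ G c d :=
    fun hac hbd => df_mono _ hac hbd
  have hgA' : |F ((i:ℝ)/K) ((j:ℝ)/K) - G ((i:ℝ)/K) ((j:ℝ)/K)| < ε/4 := hgA
  have hgB' : |F (((i:ℝ)+1)/K) (((j:ℝ)+1)/K) - G (((i:ℝ)+1)/K) (((j:ℝ)+1)/K)| < ε/4 := hgB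
  rw [abs_sub_lt_iff] at hgA' hgB'
  have e1 : ((i:ℝ)+1)/K - (i:ℝ)/K = 1/K := by ring
  have e2 : ((j:ℝ)+1)/K - (j:ℝ)/K = 1/K := by ring
  -- upper bound: G x y ≤ F x y + 3ε/4
  have up : G x y - F x y < ε := by
    have s1 : G x y ≤ G (((i:ℝ)+1)/K) (((j:ℝ)+1)/K) := monoG hxhi hyhi
    have s2 : G (((i:ℝ)+1)/K) (((j:ℝ)+1)/K) < F (((i:ℝ)+1)/K) (((j:ℝ)+1)/K) + ε/4 := by
      linarith [hgB'.2]
    have s3 : F (((i:ℝ)+1)/K) (((j:ℝ)+1)/K)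
        ≤ F x y + ((((i:ℝ)+1)/K) - x) + ((((j:ℝ)+1)/K) - y) := lipF hxhi hyhi
    have s4 : (((i:ℝ)+1)/K) - x ≤ 1/K := by linarith
    have s5 : (((j:ℝ)+1)/K) - y ≤ 1/K := by linarith
    linarith
  have down : F x y - G x y < ε := by
    have s1 : F x y ≤ F ((i:ℝ)/K) ((j:ℝ)/K) + (x - (i:ℝ)/K) + (y - (j:ℝ)/K) := lipF hxlo hylo
    have s2 : F ((i:ℝ)/K) ((j:ℝ)/K) < G ((i:ℝ)/K) ((j:ℝ)/K) + ε/4 := by linarith [hgA'.1]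
    have s3 : G ((i:ℝ)/K) ((j:ℝ)/K) ≤ G x y := monoG hxlo hylo
    have s4 : x - (i:ℝ)/K ≤ 1/K := by linarith
    have s5 : y - (j:ℝ)/K ≤ 1/K := by linarith
    linarith
  show dist (F x y) (G x y) < ε
  rw [Real.dist_eq, abs_sub_lt_iff]
  exact ⟨down, up⟩
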